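/- Let X be a 2-based Banach space with natural parameterization r. Then the following are equivalent: (1) X is linearly isometric to the 2-dimensional Euclidean Hilbert space; (2) r is twice differentiable at every s ∈ ℝ with r''(s) = −r(s) (i.e. X has radial curvature ρ(s) = 1 and tangential curvature τ(s) = 0 for all s ∈ ℝ). -/

import Mathlib

noncomputable section
open MeasureTheory Set Filter
open scoped ENNReal Topology

variable {X : Type*} [NormedAddCommGroup X] [NormedSpace ℝ X]

/-- `e^{it} = cos t • e₁ + sin t • e₂` for the basis `b 0, b 1`. -/
def expV (b : Module.Basis (Fin 2) ℝ X) (t : ℝ) : X :=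
  Real.cos t • b 0 + Real.sin t • b 1

/-- The polar parameterization `p(t) = e^{it}/‖e^{it}‖` of the unit sphere. -/
def polarParam (b : Module.Basis (Fin 2) ℝ X) (t : ℝ) : X :=
  ‖expV b t‖⁻¹ • expV b t

/-- The Euclidean norm `|x| = √(e₁*(x)² + e₂*(x)²)` associated to the basis. -/
def euclNorm (b : Module.Basis (Fin 2) ℝ X) (x : X) : ℝ :=
  Real.sqrt ((b.coord 0 x)^2 + (b.coord 1 x)^2)

/-- `c = min{‖x‖ : |x| = 1}`. -/
def cConst (b : Module.Basis (Fin 2) ℝ X) : ℝ :=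
  sInf (norm '' {x : X | euclNorm b x = 1})

/-- `C = max{‖x‖ : |x| = 1}`. -/
def CConst (b : Module.Basis (Fin 2) ℝ X) : ℝ :=
  sSup (norm '' {x : X | euclNorm b x = 1})

/-- The right derivative of a function `f : ℝ → X`. -/
def rightDeriv (f : ℝ → X) (t : ℝ) : X := derivWithin f (Ici t) t

/-- The left derivative of a function `f : ℝ → X`. -/
def leftDeriv (f : ℝ → X) (t : ℝ) : X := derivWithin f (Iic t) t

/-- The arc-length function `s(t) = ∫₀^t ‖p'₊(u)‖ du`. -/
def arcLen (b : Module.Basis (Fin 2) ℝ X) (t : ℝ) : ℝ :=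
  ∫ u in (0:ℝ)..t, ‖rightDeriv (polarParam b) u‖

/-- The half-length `L = s(π)` of the unit sphere. -/
def halfLen (b : Module.Basis (Fin 2) ℝ X) : ℝ := arcLen b Real.pi

/-- The inverse `t = s⁻¹` of the arc-length function. -/
def arcInv (b : Module.Basis (Fin 2) ℝ X) : ℝ → ℝ := Function.invFun (arcLen b)

/-- The natural parameterization `r = p ∘ t` of the unit sphere. -/
def natParam (b : Module.Basis (Fin 2) ℝ X) : ℝ → X := polarParam b ∘ arcInv b

/-- Local absolute continuity of `f` with a.e. derivative `f'`, in the sense that `f` is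
differentiable almost everywhere, `f'` is locally integrable, and `f` is recovered from `f'`
by integration. -/
def LocAC {E : Type*} [NormedAddCommGroup E] [NormedSpace ℝ E] [CompleteSpace E]
    (f f' : ℝ → E) : Prop :=
  (∀ᵐ t : ℝ, HasDerivAt f (f' t) t) ∧ LocallyIntegrable f' volume ∧
    ∀ a b : ℝ, a ≤ b → f b - f a = ∫ t in a..b, f' t

/-- `s` is a Lebesgue point of `g`. -/
def LebesguePoint {E : Type*} [NormedAddCommGroup E] (g : ℝ → E) (s : ℝ) : Prop :=
  Tendsto (fun ε : ℝ => (1/ε) * ∫ t in (0:ℝ)..ε, ‖g (s + t) - g s‖) (𝓝[≠] (0:ℝ)) (𝓝 0)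

/-! ### Auxiliary definitions for the proof: the complex picture -/

/-- The curve `cos t • u + sin t • v` in `ℂ`. -/
def wC (u v : ℂ) (t : ℝ) : ℂ := Real.cos t • u + Real.sin t • v

/-- Derivative of `wC`. -/
def wC' (u v : ℂ) (t : ℝ) : ℂ := -Real.sin t • u + Real.cos t • v

/-- The normalized curve in `ℂ`. -/
def PC (u v : ℂ) (t : ℝ) : ℂ := ‖wC u v t‖⁻¹ • wC u v t

/-- The squared norm of `wC`. -/
def NC (u v : ℂ) (t : ℝ) : ℝ := Complex.normSq (wC u v t)

/-- The determinant of `u, v`. -/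
def dC (u v : ℂ) : ℝ := u.re * v.im - u.im * v.re

/-- Speed of the normalized curve. -/
def fC (u v : ℂ) (t : ℝ) : ℝ := |dC u v| / NC u v t

/-- Arc length of the normalized curve. -/
def SC (u v : ℂ) (t : ℝ) : ℝ := ∫ x in (0:ℝ)..t, fC u v x

section ComplexLemmas

lemma aux_re (a b a' b' q d : ℝ) (hq : q ≠ 0) (hdet : a * b' - b * a' = d)
    (hN : q ^ 2 = a * a + b * b) :
    d / (a * a + b * b) * (-(q⁻¹ * b)) =
      q⁻¹ * a' + -(1 / (2 * q) * (2 * (a * a' + b * b'))) / q ^ 2 * a := by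
  have h : a * a + b * b ≠ 0 := by rw [← hN]; exact pow_ne_zero 2 hq
  rw [← hN]
  field_simp
  linear_combination b * hdet + (-a') * hN

lemma aux_im (a b a' b' q d : ℝ) (hq : q ≠ 0) (hdet : a * b' - b * a' = d)
    (hN : q ^ 2 = a * a + b * b) :
    d / (a * a + b * b) * (q⁻¹ * a) =
      q⁻¹ * b' + -(1 / (2 * q) * (2 * (a * a' + b * b'))) / q ^ 2 * b := by
  have h : a * a + b * b ≠ 0 := by rw [← hN]; exact pow_ne_zero 2 hq
  rw [← hN]
  field_simp
  linear_combination (-a) * hdet + (-b') * hN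

variable {u v : ℂ}

lemma hasDerivAt_wC (t : ℝ) : HasDerivAt (wC u v) (wC' u v t) t :=
  ((Real.hasDerivAt_cos t).smul_const u).add ((Real.hasDerivAt_sin t).smul_const v)

lemma NC_pos (hw0 : ∀ t : ℝ, wC u v t ≠ 0) (t : ℝ) : 0 < NC u v t :=
  Complex.normSq_pos.mpr (hw0 t)

lemma norm_wC (t : ℝ) : ‖wC u v t‖ = Real.sqrt (NC u v t) := by
  rw [NC, Complex.norm_def]

lemma norm_PC (hw0 : ∀ t : ℝ, wC u v t ≠ 0) (t : ℝ) : ‖PC u v t‖ = 1 := by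
  have h' : ‖wC u v t‖ ≠ 0 := norm_ne_zero_iff.2 (hw0 t)
  rw [PC, norm_smul, Real.norm_eq_abs, abs_of_nonneg (inv_nonneg.2 (norm_nonneg _)),
    inv_mul_cancel₀ h']

lemma det_wC (t : ℝ) :
    (wC u v t).re * (wC' u v t).im - (wC u v t).im * (wC' u v t).re = dC u v := by
  simp only [wC, wC', dC, Complex.add_re, Complex.add_im, Complex.smul_re, Complex.smul_im,
    smul_eq_mul]
  have h := Real.sin_sq_add_cos_sq t
  linear_combination (u.re * v.im - u.im * v.re) * h

lemma hasDerivAt_PC (hw0 : ∀ t : ℝ, wC u v t ≠ 0) (t : ℝ) :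
    HasDerivAt (PC u v) ((dC u v / NC u v t) • (Complex.I * PC u v t)) t := by
  have hre : ∀ t, HasDerivAt (fun t => (wC u v t).re) ((wC' u v t).re) t := fun t =>
    Complex.reCLM.hasFDerivAt.comp_hasDerivAt t (hasDerivAt_wC t)
  have him : ∀ t, HasDerivAt (fun t => (wC u v t).im) ((wC' u v t).im) t := fun t =>
    Complex.imCLM.hasFDerivAt.comp_hasDerivAt t (hasDerivAt_wC t)
  have hNpos := NC_pos hw0
  have hNC : ∀ t, NC u v t = (wC u v t).re * (wC u v t).re + (wC u v t).im * (wC u v t).im :=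
    fun t => Complex.normSq_apply _
  have hN : ∀ t, HasDerivAt (NC u v)
      (2 * ((wC u v t).re * (wC' u v t).re + (wC u v t).im * (wC' u v t).im)) t := by
    intro t
    have h1 := ((hre t).mul (hre t)).add ((him t).mul (him t))
    have h2 : (fun t => (wC u v t).re * (wC u v t).re + (wC u v t).im * (wC u v t).im)
        = NC u v := by funext s; rw [hNC s]
    change HasDerivAt (fun t => (wC u v t).re * (wC u v t).re + (wC u v t).im * (wC u v t).im) _ t at h1
    rw [h2] at h1
    convert h1 using 1
    ring
  set q : ℝ → ℝ := fun t => Real.sqrt (NC u v t) with hqdef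
  have hqpos : ∀ t, 0 < q t := fun t => Real.sqrt_pos.2 (hNpos t)
  have hqsq : ∀ t, q t ^ 2 = NC u v t := fun t => Real.sq_sqrt (hNpos t).le
  have hq : ∀ t, HasDerivAt q
      (1 / (2 * q t) * (2 * ((wC u v t).re * (wC' u v t).re + (wC u v t).im * (wC' u v t).im))) t :=
    fun t => (Real.hasDerivAt_sqrt (hNpos t).ne').comp t (hN t)
  have hqinv : HasDerivAt (fun t => (q t)⁻¹)
      (-(1 / (2 * q t) * (2 * ((wC u v t).re * (wC' u v t).re + (wC u v t).im * (wC' u v t).im))) / (q t) ^ 2) t :=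
    (hq t).inv (hqpos t).ne'
  have key := hqinv.smul (hasDerivAt_wC (u := u) (v := v) t)
  have hfun : PC u v = fun t => (q t)⁻¹ • wC u v t := by
    funext s; rw [PC, norm_wC]
  rw [hfun]
  convert key using 1
  · rfl
  · rfl
  rw [Complex.ext_iff]
  have hdet := det_wC (u := u) (v := v) t
  have hq0 := (hqpos t).ne'
  constructor
  · simp only [Complex.smul_re, Complex.smul_im, Complex.add_re, Complex.mul_re,
      Complex.I_re, Complex.I_im, smul_eq_mul, zero_mul, one_mul, zero_sub, hNC t]
    exact aux_re _ _ _ _ _ _ hq0 hdet ((hqsq t).trans (hNC t))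
  · simp only [Complex.smul_re, Complex.smul_im, Complex.add_im, Complex.mul_im,
      Complex.I_re, Complex.I_im, smul_eq_mul, zero_mul, one_mul, add_zero, hNC t]
    rw [zero_add]
    exact aux_im _ _ _ _ _ _ hq0 hdet ((hqsq t).trans (hNC t))

lemma continuous_NC : Continuous (NC u v) := by
  apply Complex.continuous_normSq.comp
  exact (Real.continuous_cos.smul continuous_const).add
    (Real.continuous_sin.smul continuous_const)

lemma continuous_fC (hw0 : ∀ t : ℝ, wC u v t ≠ 0) : Continuous (fC u v) :=
  continuous_const.div continuous_NC fun t => (NC_pos hw0 t).ne'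

lemma fC_pos (hw0 : ∀ t : ℝ, wC u v t ≠ 0) (hd : dC u v ≠ 0) (t : ℝ) : 0 < fC u v t :=
  div_pos (abs_pos.2 hd) (NC_pos hw0 t)

lemma hasDerivAt_SC (hw0 : ∀ t : ℝ, wC u v t ≠ 0) (t : ℝ) :
    HasDerivAt (SC u v) (fC u v t) t :=
  ((continuous_fC hw0).integral_hasStrictDerivAt 0 t).hasDerivAt

lemma strictMono_SC (hw0 : ∀ t : ℝ, wC u v t ≠ 0) (hd : dC u v ≠ 0) :
    StrictMono (SC u v) := by
  apply strictMono_of_deriv_pos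
  intro t
  rw [(hasDerivAt_SC hw0 t).deriv]
  exact fC_pos hw0 hd t

lemma periodic_fC : Function.Periodic (fC u v) Real.pi := by
  intro t
  have hw : wC u v (t + Real.pi) = -wC u v t := by
    simp only [wC, Real.cos_add_pi, Real.sin_add_pi, neg_smul]
    abel
  simp [fC, NC, hw]

lemma SC_add_pi (hw0 : ∀ t : ℝ, wC u v t ≠ 0) (t : ℝ) :
    SC u v (t + Real.pi) = SC u v t + SC u v Real.pi := by
  have hint : ∀ a b : ℝ, IntervalIntegrable (fC u v) volume a b :=
    fun a b => (continuous_fC hw0).intervalIntegrable a b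
  have h1 : SC u v (t + Real.pi) = SC u v t + ∫ x in t..(t + Real.pi), fC u v x := by
    rw [SC, SC, intervalIntegral.integral_add_adjacent_intervals (hint 0 t) (hint t _)]
  rw [h1]
  congr 1
  have hper : Function.Periodic (fC u v) Real.pi := periodic_fC
  have := hper.intervalIntegral_add_eq t 0
  rw [this, zero_add]
  rfl

lemma SC_pi_pos (hw0 : ∀ t : ℝ, wC u v t ≠ 0) (hd : dC u v ≠ 0) : 0 < SC u v Real.pi :=
  intervalIntegral.intervalIntegral_pos_of_pos
    ((continuous_fC hw0).intervalIntegrable 0 Real.pi) (fC_pos hw0 hd) Real.pi_pos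

lemma SC_zero : SC u v 0 = 0 := by simp [SC]

lemma SC_nat (hw0 : ∀ t : ℝ, wC u v t ≠ 0) (n : ℕ) :
    SC u v (n * Real.pi) = n * SC u v Real.pi := by
  induction n with
  | zero => simp [SC_zero]
  | succ n ih =>
    have : ((n : ℝ) + 1) * Real.pi = n * Real.pi + Real.pi := by ring
    push_cast
    rw [this, SC_add_pi hw0, ih]
    ring

lemma SC_neg_nat (hw0 : ∀ t : ℝ, wC u v t ≠ 0) (n : ℕ) :
    SC u v (-(n * Real.pi)) = -(n * SC u v Real.pi) := by
  induction n with
  | zero => simp [SC_zero]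
  | succ n ih =>
    have h := SC_add_pi hw0 (-(((n : ℝ) + 1) * Real.pi))
    have h2 : -(((n : ℝ) + 1) * Real.pi) + Real.pi = -(n * Real.pi) := by ring
    rw [h2] at h
    push_cast
    push_cast at ih
    linarith [h, ih]

lemma continuous_SC (hw0 : ∀ t : ℝ, wC u v t ≠ 0) : Continuous (SC u v) :=
  continuous_iff_continuousAt.2 fun t => (hasDerivAt_SC hw0 t).continuousAt

lemma surjective_SC (hw0 : ∀ t : ℝ, wC u v t ≠ 0) (hd : dC u v ≠ 0) :
    Function.Surjective (SC u v) := by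
  have hmono := (strictMono_SC hw0 hd).monotone
  have hpi := SC_pi_pos hw0 hd
  apply (continuous_SC hw0).surjective
  · apply tendsto_atTop_atTop_of_monotone hmono
    intro M
    obtain ⟨n, hn⟩ := exists_nat_ge (M / SC u v Real.pi)
    refine ⟨n * Real.pi, ?_⟩
    rw [SC_nat hw0]
    rw [div_le_iff₀ hpi] at hn
    linarith
  · apply tendsto_atBot_atBot_of_monotone hmono
    intro M
    obtain ⟨n, hn⟩ := exists_nat_ge (-M / SC u v Real.pi)
    refine ⟨-(n * Real.pi), ?_⟩
    rw [SC_neg_nat hw0]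
    rw [div_le_iff₀ hpi] at hn
    linarith

lemma bijective_SC (hw0 : ∀ t : ℝ, wC u v t ≠ 0) (hd : dC u v ≠ 0) :
    Function.Bijective (SC u v) :=
  ⟨(strictMono_SC hw0 hd).injective, surjective_SC hw0 hd⟩

lemma continuous_invFun_SC (hw0 : ∀ t : ℝ, wC u v t ≠ 0) (hd : dC u v ≠ 0) :
    Continuous (Function.invFun (SC u v)) := by
  set oi := StrictMono.orderIsoOfSurjective (SC u v) (strictMono_SC hw0 hd)
    (surjective_SC hw0 hd) with hoi
  have heq : Function.invFun (SC u v) = ⇑oi.symm := by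
    funext s
    apply (bijective_SC hw0 hd).injective
    rw [Function.rightInverse_invFun (bijective_SC hw0 hd).surjective s]
    have h2 : oi (oi.symm s) = s := oi.apply_symm_apply s
    have h3 : oi (oi.symm s) = SC u v (oi.symm s) := by
      rw [hoi]
      exact congrFun (StrictMono.coe_orderIsoOfSurjective _ _ _) _
    rw [h3] at h2
    rw [h2]
  rw [heq]
  exact oi.symm.continuous

end ComplexLemmas

/-! ### Basic lemmas about the natural parameterization -/

lemma expV_ne_zero (b : Module.Basis (Fin 2) ℝ X) (t : ℝ) : expV b t ≠ 0 := by
  intro h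
  have h0 : b.repr (expV b t) 0 = Real.cos t := by
    simp [expV, Finsupp.single_apply]
  have h1 : b.repr (expV b t) 1 = Real.sin t := by
    simp [expV, Finsupp.single_apply]
  rw [h] at h0 h1
  simp at h0 h1
  have := Real.sin_sq_add_cos_sq t
  rw [← h0, ← h1] at this
  norm_num at this

lemma norm_polarParam (b : Module.Basis (Fin 2) ℝ X) (t : ℝ) : ‖polarParam b t‖ = 1 := by
  have h := expV_ne_zero b t
  have h' : ‖expV b t‖ ≠ 0 := norm_ne_zero_iff.2 h
  simp [polarParam, norm_smul, abs_of_nonneg (inv_nonneg.2 (norm_nonneg _)),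
    inv_mul_cancel₀ h']

lemma norm_natParam (b : Module.Basis (Fin 2) ℝ X) (s : ℝ) : ‖natParam b s‖ = 1 :=
  norm_polarParam b _

/-! ### The reverse implication -/

theorem curvature_implies_isometric (b : Module.Basis (Fin 2) ℝ X) (A B : X)
    (hn : ∀ s : ℝ, ‖Real.cos s • A + Real.sin s • B‖ = 1) :
    Nonempty (X ≃ₗᵢ[ℝ] EuclideanSpace ℝ (Fin 2)) := by
  have hnorm : ∀ a c : ℝ, ‖a • A + c • B‖ = Real.sqrt (a ^ 2 + c ^ 2) := by
    intro a c
    rcases eq_or_ne (a ^ 2 + c ^ 2) 0 with h0 | h0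
    · have ha : a = 0 := by nlinarith [sq_nonneg a, sq_nonneg c]
      have hc : c = 0 := by nlinarith [sq_nonneg a, sq_nonneg c]
      simp [ha, hc]
    · set z : ℂ := ⟨a, c⟩ with hz
      have hz0 : z ≠ 0 := by
        intro h
        rw [Complex.ext_iff] at h
        simp only [hz, Complex.zero_re, Complex.zero_im] at h
        exact h0 (by rw [h.1, h.2]; ring)
      have habs : ‖z‖ = Real.sqrt (a ^ 2 + c ^ 2) := by
        rw [Complex.norm_def, Complex.normSq_mk]; ring_nf
      have hm : 0 < ‖z‖ := norm_pos_iff.2 hz0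
      have hcos : Real.cos z.arg = a / ‖z‖ := by
        rw [Complex.cos_arg hz0]
      have hsin : Real.sin z.arg = c / ‖z‖ := by
        rw [Complex.sin_arg]
      have key : a • A + c • B
          = ‖z‖ • (Real.cos z.arg • A + Real.sin z.arg • B) := by
        rw [hcos, hsin, smul_add, smul_smul, smul_smul,
          mul_div_cancel₀ _ hm.ne', mul_div_cancel₀ _ hm.ne']
      rw [key, norm_smul, hn, Real.norm_eq_abs, abs_of_pos hm, mul_one, habs]
  have hAB : LinearIndependent ℝ ![A, B] := by
    rw [LinearIndependent.pair_iff]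
    intro s t hst
    have : Real.sqrt (s ^ 2 + t ^ 2) = 0 := by rw [← hnorm, hst, norm_zero]
    have h0 : s ^ 2 + t ^ 2 = 0 := by
      have h1 := Real.sqrt_eq_zero'.mp this
      nlinarith [sq_nonneg s, sq_nonneg t]
    constructor <;> nlinarith [sq_nonneg s, sq_nonneg t]
  have hrank : Fintype.card (Fin 2) = Module.finrank ℝ X := by
    rw [Module.finrank_eq_card_basis b]
  set B2 := basisOfLinearIndependentOfCardEqFinrank hAB hrank with hB2
  have hB2coe : ∀ i, B2 i = ![A, B] i := by
    intro i; rw [hB2, coe_basisOfLinearIndependentOfCardEqFinrank]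
  set F : X ≃ₗ[ℝ] EuclideanSpace ℝ (Fin 2) :=
    B2.equivFun.trans (EuclideanSpace.equiv (Fin 2) ℝ).symm.toLinearEquiv with hF
  refine ⟨⟨F, fun x => ?_⟩⟩
  have hx : x = B2.equivFun x 0 • A + B2.equivFun x 1 • B := by
    conv_lhs => rw [← B2.sum_equivFun x]
    simp [Fin.sum_univ_two, hB2coe]
  have hFx : ∀ i, F x i = B2.equivFun x i := fun i => rfl
  rw [EuclideanSpace.norm_eq]
  conv_rhs => rw [hx, hnorm]
  congr 1
  simp [Fin.sum_univ_two, hFx, sq_abs]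

/-! ### The forward implication: setup -/

lemma dC_ne_zero (b : Module.Basis (Fin 2) ℝ X) (e : X ≃ₗᵢ[ℝ] ℂ) :
    dC (e (b 0)) (e (b 1)) ≠ 0 := by
  set u := e (b 0) with hu
  set v := e (b 1) with hv
  rw [dC]
  intro hd
  have hu0 : u ≠ 0 := by
    simp [hu, e.map_eq_zero_iff]
    exact b.ne_zero 0
  have hnsq : Complex.normSq u ≠ 0 := by
    simpa [Complex.normSq_eq_zero] using hu0
  set c : ℝ := (u.re * v.re + u.im * v.im) / Complex.normSq u with hc
  have hvc : v = c • u := by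
    rw [Complex.ext_iff]
    constructor
    · simp only [hc, Complex.smul_re, smul_eq_mul]
      rw [div_mul_eq_mul_div, eq_div_iff hnsq, Complex.normSq_apply]
      linear_combination (-u.im) * hd
    · simp only [hc, Complex.smul_im, smul_eq_mul]
      rw [div_mul_eq_mul_div, eq_div_iff hnsq, Complex.normSq_apply]
      linear_combination u.re * hd
  have hb1 : b 1 = c • b 0 := by
    have h := congrArg e.symm hvc
    rw [hv, hu, e.symm_apply_apply, _root_.map_smul, e.symm_apply_apply] at h
    exact h
  have h1 : b.repr (b 1) 1 = 1 := by simp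
  rw [hb1] at h1
  simp [Finsupp.single_apply] at h1

/-- A 2-based Banach space is linearly isometric to the 2-dimensional Euclidean Hilbert space
if and only if its natural parameterization satisfies `r'' = −r` everywhere (radial curvature
`1`, tangential curvature `0`). -/
theorem isometric_euclidean_iff_curvature [CompleteSpace X] (b : Module.Basis (Fin 2) ℝ X) :
    Nonempty (X ≃ₗᵢ[ℝ] EuclideanSpace ℝ (Fin 2)) ↔
      (∀ s : ℝ, DifferentiableAt ℝ (natParam b) s ∧
        HasDerivAt (deriv (natParam b)) (-(natParam b s)) s) := by
  constructor
  · rintro ⟨iso⟩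
    set e : X ≃ₗᵢ[ℝ] ℂ :=
      iso.trans (Complex.isometryOfOrthonormal (EuclideanSpace.basisFun (Fin 2) ℝ)).symm
      with he
    set u := e (b 0) with hu
    set v := e (b 1) with hv
    have hd : dC u v ≠ 0 := dC_ne_zero b e
    have hwE : ∀ t, e (expV b t) = wC u v t := by
      intro t
      simp [expV, wC, map_add, _root_.map_smul]
      rfl
    have hw0 : ∀ t, wC u v t ≠ 0 := by
      intro t h
      rw [← hwE t] at h
      exact expV_ne_zero b t (by simpa [e.map_eq_zero_iff] using h)
    have hpolar : ∀ t, polarParam b t = e.symm (PC u v t) := by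
      intro t
      rw [polarParam, PC, _root_.map_smul, ← hwE t, e.symm_apply_apply, e.norm_map]
    -- derivative of the polar parameterization
    have hpd : ∀ t, HasDerivAt (polarParam b)
        (e.symm ((dC u v / NC u v t) • (Complex.I * PC u v t))) t := by
      intro t
      have h := hasDerivAt_PC hw0 t
      have h2 := (e.symm.toContinuousLinearEquiv.hasFDerivAt).comp_hasDerivAt t h
      have h3 : (⇑e.symm.toContinuousLinearEquiv ∘ PC u v) = polarParam b := by
        funext x
        rw [hpolar x]
        rfl
      rw [h3] at h2
      exact h2
    have hrd : ∀ t, ‖rightDeriv (polarParam b) t‖ = fC u v t := by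
      intro t
      have h1 : rightDeriv (polarParam b) t
          = e.symm ((dC u v / NC u v t) • (Complex.I * PC u v t)) := by
        rw [rightDeriv]
        exact ((hpd t).hasDerivWithinAt).derivWithin (uniqueDiffOn_Ici t t self_mem_Ici)
      rw [h1, e.symm.norm_map, norm_smul, norm_mul, Complex.norm_I, one_mul,
        norm_PC hw0 t, mul_one, Real.norm_eq_abs, abs_div,
        abs_of_pos (NC_pos hw0 t), fC]
    have harc : arcLen b = SC u v := by
      funext t
      rw [arcLen, SC]
      exact intervalIntegral.integral_congr fun x _ => hrd x
    have hAI : arcInv b = Function.invFun (SC u v) := by rw [arcInv, harc]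
    have hbij := bijective_SC hw0 hd
    have hrinv : ∀ s, SC u v (arcInv b s) = s := by
      intro s
      rw [hAI]
      exact Function.rightInverse_invFun hbij.2 s
    have hcont : Continuous (arcInv b) := by
      rw [hAI]; exact continuous_invFun_SC hw0 hd
    have hTd : ∀ s, HasDerivAt (arcInv b) ((fC u v (arcInv b s))⁻¹) s := by
      intro s
      exact HasDerivAt.of_local_left_inverse hcont.continuousAt
        (hasDerivAt_SC hw0 (arcInv b s)) (fC_pos hw0 hd _).ne'
        (Eventually.of_forall hrinv)
    set ε : ℝ := dC u v / |dC u v| with hε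
    have hε2 : ε * ε = 1 := by
      rw [hε, div_mul_div_comm, ← sq, ← sq, sq_abs]
      exact div_self (pow_ne_zero 2 hd)
    -- derivative of the natural parameterization
    have hr' : ∀ s, HasDerivAt (natParam b)
        (e.symm (ε • (Complex.I * e (natParam b s)))) s := by
      intro s
      have h1 := HasDerivAt.scomp (𝕜 := ℝ) (𝕜' := ℝ) s (hpd (arcInv b s)) (hTd s)
      have h2 : (fC u v (arcInv b s))⁻¹ •
          e.symm ((dC u v / NC u v (arcInv b s)) • (Complex.I * PC u v (arcInv b s)))
          = e.symm (ε • (Complex.I * e (natParam b s))) := by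
        rw [← _root_.map_smul, smul_smul]
        congr 1
        have hPCe : PC u v (arcInv b s) = e (natParam b s) := by
          have := hpolar (arcInv b s)
          rw [natParam, Function.comp_apply, this, e.apply_symm_apply]
        rw [hPCe]
        congr 1
        rw [fC, hε]
        have hN0 := (NC_pos hw0 (arcInv b s)).ne'
        have habs : |dC u v| ≠ 0 := abs_ne_zero.mpr hd
        field_simp
      rw [h2] at h1
      exact h1
    intro s
    refine ⟨(hr' s).differentiableAt, ?_⟩
    have hderiv_eq : deriv (natParam b)
        = fun s => e.symm (ε • (Complex.I * e (natParam b s))) := by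
      funext x
      exact (hr' x).deriv
    rw [hderiv_eq]
    -- second derivative
    have hg1 : HasDerivAt (fun x => e (natParam b x)) (ε • (Complex.I * e (natParam b s))) s := by
      have h := (e.toContinuousLinearEquiv.hasFDerivAt).comp_hasDerivAt s (hr' s)
      have h2 : (⇑e.toContinuousLinearEquiv ∘ natParam b) = fun x => e (natParam b x) := rfl
      rw [h2] at h
      have h3 : e.toContinuousLinearEquiv.toContinuousLinearMap
          (e.symm (ε • (Complex.I * e (natParam b s))))
          = ε • (Complex.I * e (natParam b s)) := by
        show e (e.symm _) = _
        rw [e.apply_symm_apply]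
      rwa [h3] at h
    have h4 : HasDerivAt (fun x => ε • (Complex.I * e (natParam b x)))
        (ε • (Complex.I * (ε • (Complex.I * e (natParam b s))))) s :=
      (hg1.const_mul Complex.I).const_smul ε
    have h5 := (e.symm.toContinuousLinearEquiv.hasFDerivAt).comp_hasDerivAt s h4
    have h6 : (⇑e.symm.toContinuousLinearEquiv ∘ fun x => ε • (Complex.I * e (natParam b x)))
        = fun x => e.symm (ε • (Complex.I * e (natParam b x))) := rfl
    rw [h6] at h5
    have h7 : e.symm.toContinuousLinearEquiv.toContinuousLinearMap
        (ε • (Complex.I * (ε • (Complex.I * e (natParam b s)))))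
        = -(natParam b s) := by
      show e.symm _ = _
      have hz : ε • (Complex.I * (ε • (Complex.I * e (natParam b s))))
          = -(e (natParam b s)) := by
        rw [mul_smul_comm, smul_smul, ← mul_assoc, Complex.I_mul_I, hε2, one_smul,
          neg_one_mul]
      rw [hz, map_neg, e.symm_apply_apply]
    rwa [h7] at h5
  · intro h
    have hr : ∀ s, HasDerivAt (natParam b) (deriv (natParam b) s) s :=
      fun s => (h s).1.hasDerivAt
    have hr' : ∀ s, HasDerivAt (deriv (natParam b)) (-(natParam b s)) s :=
      fun s => (h s).2
    set r := natParam b with hrdef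
    set r' := deriv (natParam b) with hr'def
    -- solve the ODE
    have hsol : ∀ s : ℝ, r s = Real.cos s • r 0 + Real.sin s • r' 0 := by
      intro s
      set g₁ : ℝ → X := fun s => Real.cos s • r s - Real.sin s • r' s with hg₁
      set g₂ : ℝ → X := fun s => Real.sin s • r s + Real.cos s • r' s with hg₂
      have hd₁ : ∀ t, HasDerivAt g₁ 0 t := by
        intro t
        have h1 : HasDerivAt (fun s => Real.cos s • r s)
            (Real.cos t • r' t + (-Real.sin t) • r t) t :=
          (Real.hasDerivAt_cos t).smul (hr t)
        have h2 : HasDerivAt (fun s => Real.sin s • r' s)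
            (Real.sin t • (-(r t)) + Real.cos t • r' t) t :=
          (Real.hasDerivAt_sin t).smul (hr' t)
        have := h1.sub h2
        convert this using 1
        · rfl
        simp [smul_neg]
        abel
      have hd₂ : ∀ t, HasDerivAt g₂ 0 t := by
        intro t
        have h1 : HasDerivAt (fun s => Real.sin s • r s)
            (Real.sin t • r' t + Real.cos t • r t) t :=
          (Real.hasDerivAt_sin t).smul (hr t)
        have h2 : HasDerivAt (fun s => Real.cos s • r' s)
            (Real.cos t • (-(r t)) + (-Real.sin t) • r' t) t :=
          (Real.hasDerivAt_cos t).smul (hr' t)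
        have := h1.add h2
        convert this using 1
        · rfl
        simp [smul_neg]
      have hc₁ : g₁ s = g₁ 0 :=
        is_const_of_deriv_eq_zero (fun t => (hd₁ t).differentiableAt)
          (fun t => (hd₁ t).deriv) s 0
      have hc₂ : g₂ s = g₂ 0 :=
        is_const_of_deriv_eq_zero (fun t => (hd₂ t).differentiableAt)
          (fun t => (hd₂ t).deriv) s 0
      have key : Real.cos s • g₁ s + Real.sin s • g₂ s = r s := by
        have hk : Real.cos s • g₁ s + Real.sin s • g₂ s
            = (Real.sin s ^ 2 + Real.cos s ^ 2) • r s := by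
          simp only [hg₁, hg₂]
          match_scalars <;> ring
        rw [hk, Real.sin_sq_add_cos_sq, one_smul]
      rw [hc₁, hc₂] at key
      simp only [hg₁, hg₂, Real.cos_zero, Real.sin_zero, one_smul, zero_smul, sub_zero,
        zero_add] at key
      exact key.symm
    apply curvature_implies_isometric b (r 0) (r' 0)
    intro s
    rw [← hsol s]
    exact norm_natParam b s

end
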